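/- arXiv:2010.12112 — 7 statements merged into one kernel-verified Lean document; each statement's English description precedes it below -/
import Mathlib

section
/- Let ε ≥ 0 and 0 ≤ δ ≤ 1, and let TPR, FPR ∈ [0,1] be real numbers satisfying FPR + e^ε·(1 − TPR) ≥ 1 − δ and (1 − TPR) + e^ε·FPR ≥ 1 − δ. Then TPR − FPR ≤ (e^ε − 1 + 2δ)/(e^ε + 1). -/
theorem advantage_bound_from_kairouz
    (ε δ TPR FPR : ℝ)
    (hε : 0 ≤ ε) (hδ0 : 0 ≤ δ) (hδ1 : δ ≤ 1)
    (hT0 : 0 ≤ TPR) (hT1 : TPR ≤ 1) (hF0 : 0 ≤ FPR) (hF1 : FPR ≤ 1)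
    (h1 : FPR + Real.exp ε * (1 - TPR) ≥ 1 - δ)
    (h2 : (1 - TPR) + Real.exp ε * FPR ≥ 1 - δ) :
    TPR - FPR ≤ (Real.exp ε - 1 + 2 * δ) / (Real.exp ε + 1) := by
  have hp : (0:ℝ) < Real.exp ε + 1 := by positivity
  rw [le_div_iff₀ hp]
  nlinarith [Real.exp_pos ε]
end

section
/- For all ε ≥ 0 and all δ with 0 ≤ δ ≤ 1, (e^ε − 1 + 2δ)/(e^ε + 1) ≤ 1 − e^{−ε}·(1 − δ). -/
theorem new_bound_tighter_than_erlingsson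
    (ε δ : ℝ) (hε : 0 ≤ ε) (hδ0 : 0 ≤ δ) (hδ1 : δ ≤ 1) :
    (Real.exp ε - 1 + 2 * δ) / (Real.exp ε + 1) ≤ 1 - Real.exp (-ε) * (1 - δ) := by
  have ha : 1 ≤ Real.exp ε := Real.one_le_exp hε
  have h1 : Real.exp (-ε) * Real.exp ε = 1 := by
    rw [← Real.exp_add]; simp
  have hpos : 0 < Real.exp ε + 1 := by positivity
  rw [div_le_iff₀ hpos]
  nlinarith [mul_nonneg (sub_nonneg.2 ha) (sub_nonneg.2 hδ1), Real.exp_pos (-ε),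
    mul_nonneg (Real.exp_pos (-ε)).le (mul_nonneg (sub_nonneg.2 ha) (sub_nonneg.2 hδ1))]
end

section
/- Let P₀ and P₁ be probability measures satisfying (ε,δ)-indistinguishability in both directions (P_i(E) ≤ e^ε · P_{1-i}(E) + δ for all measurable E and i ∈ {0,1}). Then for every measurable decision function f into {0,1}, P₀(f = 0) − P₁(f = 0) ≤ (e^ε − 1 + 2δ)/(e^ε + 1). -/
theorem advantage_bound_indistinguishable
    {Ω : Type*} [MeasurableSpace Ω]
    (P₀ P₁ : MeasureTheory.Measure Ω)
    [MeasureTheory.IsProbabilityMeasure P₀] [MeasureTheory.IsProbabilityMeasure P₁]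
    (ε δ : ℝ) (hε : 0 ≤ ε) (hδ0 : 0 ≤ δ) (hδ1 : δ ≤ 1)
    (h01 : ∀ E : Set Ω, MeasurableSet E →
      (P₀ E).toReal ≤ Real.exp ε * (P₁ E).toReal + δ)
    (h10 : ∀ E : Set Ω, MeasurableSet E →
      (P₁ E).toReal ≤ Real.exp ε * (P₀ E).toReal + δ)
    (f : Ω → Bool) (hf : Measurable f) :
    (P₀ {x | f x = false}).toReal - (P₁ {x | f x = false}).toReal ≤
      (Real.exp ε - 1 + 2 * δ) / (Real.exp ε + 1) := by
  set E : Set Ω := {x | f x = false} with hE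
  have hEmeas : MeasurableSet E := hf (MeasurableSet.singleton false)
  have h1 := h01 E hEmeas
  have h2 := h10 Eᶜ hEmeas.compl
  have hc0 : (P₀ Eᶜ).toReal = 1 - (P₀ E).toReal := by
    rw [MeasureTheory.prob_compl_eq_one_sub hEmeas,
      ENNReal.toReal_sub_of_le MeasureTheory.prob_le_one ENNReal.one_ne_top,
      ENNReal.toReal_one]
  have hc1 : (P₁ Eᶜ).toReal = 1 - (P₁ E).toReal := by
    rw [MeasureTheory.prob_compl_eq_one_sub hEmeas,
      ENNReal.toReal_sub_of_le MeasureTheory.prob_le_one ENNReal.one_ne_top,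
      ENNReal.toReal_one]
  rw [hc0, hc1] at h2
  have hpos : 0 < Real.exp ε + 1 := by positivity
  rw [le_div_iff₀ hpos]
  nlinarith [Real.exp_pos ε]
end

section
/- Consider the following abstract pathological mixture experiment: Z is a finite type with at least two elements, p is the uniform distribution on Z, and the data dependence is total, i.e., conditioned on z being a member the whole training multiset is {z}^n. Let M : multiset Z → PMF α be a mechanism such that for some z₀ ≠ z₁ and some event R, M({z₀}^n)(R) = 1 and M({z₁}^n)(R) = 0. Then there is a test (output the bit 'member' iff the observation (a, z) satisfies a ∈ R and z = z₀, and 'non-member' iff a ∈ R and z = z₁, arbitrary otherwise) whose advantage, conditioned on the challenge point being in {z₀, z₁}, equals 1. -/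
open Classical in
private lemma pmf_compl_add {α : Type*} (q : PMF α) (s : Set α) :
    q.toOuterMeasure s + q.toOuterMeasure sᶜ = 1 := by
  rw [PMF.toOuterMeasure_apply, PMF.toOuterMeasure_apply, ← ENNReal.tsum_add]
  have : ∀ x, s.indicator q x + sᶜ.indicator q x = q x := by
    intro x
    by_cases hx : x ∈ s
    · simp [Set.indicator_apply, hx]
    · simp [Set.indicator_apply, hx]
  simp_rw [this]
  exact q.tsum_coe

open Classical in
theorem pathological_mixture_perfect_advantage
    {Z α : Type*} [Fintype Z] [Nontrivial Z] [MeasurableSpace α]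
    (p : PMF Z) (hp : ∀ z : Z, p z = (Fintype.card Z : ENNReal)⁻¹)
    (M : Multiset Z → PMF α) (n : ℕ)
    (z₀ z₁ : Z) (hz : z₀ ≠ z₁) (R : Set α)
    (h0 : (M (Multiset.replicate n z₀)).toOuterMeasure R = 1)
    (h1 : (M (Multiset.replicate n z₁)).toOuterMeasure R = 0) :
    ∃ Att : α → Z → Bool,
      ((1 / 2) * ((M (Multiset.replicate n z₀)).toOuterMeasure
            {a | Att a z₀ = false}).toReal +
        (1 / 2) * ((M (Multiset.replicate n z₁)).toOuterMeasure
            {a | Att a z₁ = false}).toReal) -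
      ((1 / 2) * ((M (Multiset.replicate n z₀)).toOuterMeasure
            {a | Att a z₁ = false}).toReal +
        (1 / 2) * ((M (Multiset.replicate n z₁)).toOuterMeasure
            {a | Att a z₀ = false}).toReal) = 1 := by
  refine ⟨fun a z => if z = z₀ then (if a ∈ R then false else true)
      else (if a ∈ R then true else false), ?_⟩
  have hs0 : {a : α | (if z₀ = z₀ then (if a ∈ R then false else true)
      else (if a ∈ R then true else false)) = false} = R := by
    ext a; by_cases ha : a ∈ R <;> simp [ha]
  have hs1 : {a : α | (if z₁ = z₀ then (if a ∈ R then false else true)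
      else (if a ∈ R then true else false)) = false} = Rᶜ := by
    ext a; by_cases ha : a ∈ R <;> simp [ha, hz.symm]
  have hc0 : (M (Multiset.replicate n z₀)).toOuterMeasure Rᶜ = 0 := by
    have := pmf_compl_add (M (Multiset.replicate n z₀)) R
    rw [h0] at this
    nth_rewrite 2 [← add_zero (1 : ENNReal)] at this
    exact (ENNReal.add_right_inj ENNReal.one_ne_top).1 this
  have hc1 : (M (Multiset.replicate n z₁)).toOuterMeasure Rᶜ = 1 := by
    have := pmf_compl_add (M (Multiset.replicate n z₁)) R
    rwa [h1, zero_add] at this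
  rw [hs0, hs1, h0, h1, hc0, hc1]
  norm_num
end

section
/- Let P₀, P₁ satisfy the two-sided (ε,δ)-closeness P_i(E) ≤ e^ε P_{1-i}(E) + δ for all events E. Then the total variation distance between P₀ and P₁ is at most (e^ε − 1 + 2δ)/(e^ε + 1). -/
theorem tv_bound_indistinguishable
    {Ω : Type*} [MeasurableSpace Ω]
    (P₀ P₁ : MeasureTheory.Measure Ω)
    [MeasureTheory.IsProbabilityMeasure P₀] [MeasureTheory.IsProbabilityMeasure P₁]
    (ε δ : ℝ) (hε : 0 ≤ ε) (hδ0 : 0 ≤ δ) (hδ1 : δ ≤ 1)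
    (h01 : ∀ E : Set Ω, MeasurableSet E →
      (P₀ E).toReal ≤ Real.exp ε * (P₁ E).toReal + δ)
    (h10 : ∀ E : Set Ω, MeasurableSet E →
      (P₁ E).toReal ≤ Real.exp ε * (P₀ E).toReal + δ) :
    ∀ E : Set Ω, MeasurableSet E →
      |(P₀ E).toReal - (P₁ E).toReal| ≤
        (Real.exp ε - 1 + 2 * δ) / (Real.exp ε + 1) := by
  intro E hE
  have h1 : (1 : ℝ) ≤ Real.exp ε := Real.one_le_exp hε
  have hpos : (0 : ℝ) < Real.exp ε + 1 := by linarith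
  have hc0 : (P₀ Eᶜ).toReal = 1 - (P₀ E).toReal := by
    rw [MeasureTheory.prob_compl_eq_one_sub hE,
      ENNReal.toReal_sub_of_le MeasureTheory.prob_le_one ENNReal.one_ne_top,
      ENNReal.toReal_one]
  have hc1 : (P₁ Eᶜ).toReal = 1 - (P₁ E).toReal := by
    rw [MeasureTheory.prob_compl_eq_one_sub hE,
      ENNReal.toReal_sub_of_le MeasureTheory.prob_le_one ENNReal.one_ne_top,
      ENNReal.toReal_one]
  have a01 := h01 E hE
  have a10 := h10 E hE
  have b01 := h01 Eᶜ hE.compl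
  have b10 := h10 Eᶜ hE.compl
  rw [hc0, hc1] at b01 b10
  rw [abs_le]
  constructor
  · rw [neg_le, le_div_iff₀ hpos]
    nlinarith
  · rw [le_div_iff₀ hpos]
    nlinarith
end

section
/- Let P₀, P₁ satisfy the two-sided pure ε-closeness P_i(E) ≤ e^ε P_{1-i}(E) for all events E (δ = 0). Then for any test f, both P₀(f=0) − P₁(f=0) and P₁(f=1) − P₀(f=1) are bounded by (e^ε − 1)/(e^ε + 1), and the bound is achieved by the pair of Bernoulli distributions P₀ = Bernoulli(e^ε/(e^ε+1)), P₁ = Bernoulli(1/(e^ε+1)) with the identity test. -/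
open MeasureTheory

open Classical in
lemma dp_mix_apply (p q : ℝ) (hp : 0 ≤ p) (hq : 0 ≤ q) (E : Set Bool) :
    (((ENNReal.ofReal p) • Measure.dirac false + (ENNReal.ofReal q) • Measure.dirac true) E).toReal
      = (if false ∈ E then p else 0) + (if true ∈ E then q else 0) := by
  rw [Measure.add_apply, Measure.smul_apply, Measure.smul_apply, smul_eq_mul, smul_eq_mul,
    Measure.dirac_apply, Measure.dirac_apply]
  by_cases h1 : false ∈ E <;> by_cases h2 : true ∈ E <;>
    simp [h1, h2, Set.indicator_of_mem, Set.indicator_of_notMem,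
      ENNReal.toReal_ofReal hp, ENNReal.toReal_ofReal hq,
      ENNReal.toReal_add ENNReal.ofReal_ne_top ENNReal.ofReal_ne_top]

theorem pure_dp_advantage_bound_tight
    {Ω : Type*} [MeasurableSpace Ω]
    (P₀ P₁ : MeasureTheory.Measure Ω)
    [MeasureTheory.IsProbabilityMeasure P₀] [MeasureTheory.IsProbabilityMeasure P₁]
    (ε : ℝ) (hε : 0 ≤ ε)
    (h01 : ∀ E : Set Ω, MeasurableSet E →
      (P₀ E).toReal ≤ Real.exp ε * (P₁ E).toReal)
    (h10 : ∀ E : Set Ω, MeasurableSet E →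
      (P₁ E).toReal ≤ Real.exp ε * (P₀ E).toReal) :
    (∀ f : Ω → Bool, Measurable f →
      (P₀ {x | f x = false}).toReal - (P₁ {x | f x = false}).toReal ≤
          (Real.exp ε - 1) / (Real.exp ε + 1) ∧
        (P₁ {x | f x = true}).toReal - (P₀ {x | f x = true}).toReal ≤
          (Real.exp ε - 1) / (Real.exp ε + 1)) ∧
    (∃ Q₀ Q₁ : MeasureTheory.Measure Bool,
      MeasureTheory.IsProbabilityMeasure Q₀ ∧ MeasureTheory.IsProbabilityMeasure Q₁ ∧
      Q₀ {false} = ENNReal.ofReal (Real.exp ε / (Real.exp ε + 1)) ∧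
      Q₁ {false} = ENNReal.ofReal (1 / (Real.exp ε + 1)) ∧
      (∀ E : Set Bool, (Q₀ E).toReal ≤ Real.exp ε * (Q₁ E).toReal) ∧
      (∀ E : Set Bool, (Q₁ E).toReal ≤ Real.exp ε * (Q₀ E).toReal) ∧
      (Q₀ {x : Bool | id x = false}).toReal - (Q₁ {x : Bool | id x = false}).toReal =
        (Real.exp ε - 1) / (Real.exp ε + 1)) := by
  have he1 : (1:ℝ) ≤ Real.exp ε := Real.one_le_exp hε
  set e := Real.exp ε with he
  have hpos : (0:ℝ) < e + 1 := by linarith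
  have hep : 0 ≤ e := by linarith
  constructor
  · intro f hf
    have hmf : MeasurableSet {x | f x = false} := hf (measurableSet_singleton false)
    have hmt : MeasurableSet {x | f x = true} := hf (measurableSet_singleton true)
    have hcompl : {x | f x = true} = {x | f x = false}ᶜ := by
      ext x; cases h : f x <;> simp [h]
    have key : ∀ P : Measure Ω, IsProbabilityMeasure P →
        (P {x | f x = true}).toReal = 1 - (P {x | f x = false}).toReal := by
      intro P hP
      rw [hcompl, measure_compl hmf (measure_ne_top _ _), measure_univ,
        ENNReal.toReal_sub_of_le prob_le_one ENNReal.one_ne_top]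
      simp
    have hA := h01 _ hmf
    have hB := h10 _ hmt
    have hA' := h01 _ hmt
    have hB' := h10 _ hmf
    rw [key P₀ inferInstance] at hA' hB
    rw [key P₁ inferInstance] at hA' hB
    constructor
    · rw [le_div_iff₀ hpos]
      nlinarith [hA, hB]
    · rw [key P₀ inferInstance, key P₁ inferInstance, le_div_iff₀ hpos]
      nlinarith [hA', hB']
  · have hpq : e/(e+1) + 1/(e+1) = 1 := by field_simp
    have hqp : 1/(e+1) + e/(e+1) = 1 := by rw [add_comm]; exact hpq
    have hp0 : (0:ℝ) ≤ e/(e+1) := by positivity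
    have hq0 : (0:ℝ) ≤ 1/(e+1) := by positivity
    have Hpp : e/(e+1) ≤ e * (1/(e+1)) := le_of_eq (mul_one_div e (e+1)).symm
    have Hqq : 1/(e+1) ≤ e * (e/(e+1)) := by
      rw [mul_div_assoc']
      exact (div_le_div_iff_of_pos_right hpos).mpr (by nlinarith)
    have Hone : (1:ℝ) ≤ e * 1 := by simpa using he1
    refine ⟨(ENNReal.ofReal (e/(e+1))) • Measure.dirac false + (ENNReal.ofReal (1/(e+1))) • Measure.dirac true,
            (ENNReal.ofReal (1/(e+1))) • Measure.dirac false + (ENNReal.ofReal (e/(e+1))) • Measure.dirac true,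
            ?_, ?_, ?_, ?_, ?_, ?_, ?_⟩
    · constructor
      rw [Measure.add_apply, Measure.smul_apply, Measure.smul_apply, smul_eq_mul, smul_eq_mul]
      simp only [measure_univ, mul_one]
      rw [← ENNReal.ofReal_add hp0 hq0, hpq, ENNReal.ofReal_one]
    · constructor
      rw [Measure.add_apply, Measure.smul_apply, Measure.smul_apply, smul_eq_mul, smul_eq_mul]
      simp only [measure_univ, mul_one]
      rw [← ENNReal.ofReal_add hq0 hp0, hqp, ENNReal.ofReal_one]
    · rw [Measure.add_apply, Measure.smul_apply, Measure.smul_apply, smul_eq_mul, smul_eq_mul,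
        Measure.dirac_apply, Measure.dirac_apply]
      simp [Set.indicator]
    · rw [Measure.add_apply, Measure.smul_apply, Measure.smul_apply, smul_eq_mul, smul_eq_mul,
        Measure.dirac_apply, Measure.dirac_apply]
      simp [Set.indicator]
    · intro E
      rw [dp_mix_apply _ _ hp0 hq0 E, dp_mix_apply _ _ hq0 hp0 E]
      by_cases h1 : false ∈ E <;> by_cases h2 : true ∈ E <;>
        simp only [h1, h2, if_true, if_false, add_zero, zero_add] <;>
        first
          | exact Hpp
          | exact Hqq
          | (rw [hpq, hqp]; exact Hone)
          | simp
    · intro E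
      rw [dp_mix_apply _ _ hq0 hp0 E, dp_mix_apply _ _ hp0 hq0 E]
      by_cases h1 : false ∈ E <;> by_cases h2 : true ∈ E <;>
        simp only [h1, h2, if_true, if_false, add_zero, zero_add] <;>
        first
          | exact Hpp
          | exact Hqq
          | (rw [hpq, hqp]; exact Hone)
          | simp
    · have hset : {x : Bool | id x = false} = {false} := by ext x; cases x <;> simp
      rw [hset, dp_mix_apply _ _ hp0 hq0, dp_mix_apply _ _ hq0 hp0]
      norm_num
      rw [← one_div, div_sub_div_same]
end

section
/- For all ε ≥ 0 and δ ∈ [0,1], the three bounds satisfy the chain (e^ε − 1 + 2δ)/(e^ε + 1) ≤ 1 − e^{−ε}(1 − δ) ≤ min(1, e^ε − 1 + δ·e^ε + δ), and for 0.1 ≤ ε ≤ 2 and δ = 10^{-5} the gap between the first two bounds, (1 − e^{−ε}(1−δ)) − (e^ε − 1 + 2δ)/(e^ε + 1), is positive. -/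
theorem bounds_chain_and_gap_positive :
    (∀ ε δ : ℝ, 0 ≤ ε → 0 ≤ δ → δ ≤ 1 →
      (Real.exp ε - 1 + 2 * δ) / (Real.exp ε + 1) ≤ 1 - Real.exp (-ε) * (1 - δ) ∧
      1 - Real.exp (-ε) * (1 - δ) ≤
        min 1 (Real.exp ε - 1 + δ * Real.exp ε + δ)) ∧
    (∀ ε : ℝ, 0.1 ≤ ε → ε ≤ 2 →
      0 < (1 - Real.exp (-ε) * (1 - (10 : ℝ)^(-(5 : ℤ)))) -
        (Real.exp ε - 1 + 2 * (10 : ℝ)^(-(5 : ℤ))) / (Real.exp ε + 1)) := by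
  constructor
  · intro ε δ hε hδ0 hδ1
    have hE1 : (1:ℝ) ≤ Real.exp ε := Real.one_le_exp hε
    have hEpos : (0:ℝ) < Real.exp ε := Real.exp_pos ε
    have hneg : Real.exp (-ε) = (Real.exp ε)⁻¹ := Real.exp_neg ε
    set E := Real.exp ε with hEdef
    have hE1pos : (0:ℝ) < E + 1 := by linarith
    have hinv : E * E⁻¹ = 1 := mul_inv_cancel₀ (ne_of_gt hEpos)
    refine ⟨?_, ?_⟩
    · rw [hneg, div_le_iff₀ hE1pos]
      nlinarith [mul_nonneg (mul_nonneg (le_of_lt hEpos) hδ0) (sub_nonneg.2 hE1),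
        mul_nonneg hδ0 (sub_nonneg.2 hE1), sq_nonneg (E - 1)]
    · rw [le_min_iff, hneg]
      constructor
      · have : 0 ≤ E⁻¹ * (1 - δ) :=
          mul_nonneg (le_of_lt (inv_pos.2 hEpos)) (by linarith)
        linarith
      · have h : E * (E⁻¹ * (1 - δ)) = 1 - δ := by
          rw [← mul_assoc, hinv, one_mul]
        nlinarith [sq_nonneg (E - 1), mul_nonneg hδ0 (sq_nonneg (E - 1)),
          mul_nonneg hδ0 (sub_nonneg.2 hE1)]
  · intro ε h1 h2
    have hE : (1.1:ℝ) ≤ Real.exp ε := by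
      have := Real.add_one_le_exp ε
      linarith
    have hEpos : (0:ℝ) < Real.exp ε := Real.exp_pos ε
    have hneg : Real.exp (-ε) = (Real.exp ε)⁻¹ := Real.exp_neg ε
    set E := Real.exp ε with hEdef
    have hδ : ((10:ℝ)^(-(5:ℤ)) : ℝ) = 1/100000 := by norm_num
    rw [hneg, hδ]
    have hE1pos : (0:ℝ) < E + 1 := by linarith
    have hEne : E ≠ 0 := ne_of_gt hEpos
    have key : 1 - E⁻¹ * (1 - 1/100000) - (E - 1 + 2 * (1/100000)) / (E + 1)
        = (E - 1) * (1 - 1/100000) / (E * (E + 1)) := by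
      field_simp
      ring
    rw [key]
    apply div_pos
    · nlinarith
    · positivity
end
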